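/- arXiv:2510.03563 — 3 statements merged into one kernel-verified Lean document; each statement's English description precedes it below -/
import Mathlib

section
/- For every natural number k, every vector field v : ℝ² → ℝ² whose two components are real polynomial functions of total degree at most k can be written as v = ∇p + x⊥·q, where p : ℝ² → ℝ is a polynomial function of total degree at most k+1, q : ℝ² → ℝ is a polynomial function of total degree at most k−1 (with q = 0 when k = 0), and x⊥·q denotes the vector field (x,y) ↦ (y·q(x,y), −x·q(x,y)). -/
/-- `f : ℝ² → ℝ` is a real polynomial function of total degree at most `k`. -/
def IsPolyFunDeg (f : ℝ × ℝ → ℝ) (k : ℕ) : Prop :=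
  ∃ P : MvPolynomial (Fin 2) ℝ, P.totalDegree ≤ k ∧
    ∀ z : ℝ × ℝ, f z = MvPolynomial.eval ![z.1, z.2] P

/-- Partial derivative in the first variable. -/
noncomputable def pdx (f : ℝ × ℝ → ℝ) (z : ℝ × ℝ) : ℝ := fderiv ℝ f z (1, 0)

/-- Partial derivative in the second variable. -/
noncomputable def pdy (f : ℝ × ℝ → ℝ) (z : ℝ × ℝ) : ℝ := fderiv ℝ f z (0, 1)

open MvPolynomial

noncomputable def evalFun (P : MvPolynomial (Fin 2) ℝ) : ℝ × ℝ → ℝ := fun z => eval ![z.1, z.2] P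

theorem evalFun_hasFDerivAt (P : MvPolynomial (Fin 2) ℝ) (z : ℝ × ℝ) :
    HasFDerivAt (evalFun P)
      (evalFun (pderiv 0 P) z • ContinuousLinearMap.fst ℝ ℝ ℝ +
       evalFun (pderiv 1 P) z • ContinuousLinearMap.snd ℝ ℝ ℝ) z := by
  induction P using MvPolynomial.induction_on with
  | C a =>
    have h : HasFDerivAt (evalFun (C a : MvPolynomial (Fin 2) ℝ)) (0 : ℝ × ℝ →L[ℝ] ℝ) z := by
      have he : evalFun (C a : MvPolynomial (Fin 2) ℝ) = fun _ : ℝ × ℝ => a := by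
        funext w; simp [evalFun]
      rw [he]
      exact (hasFDerivAt_const a z : HasFDerivAt (fun _ : ℝ × ℝ => a) (0 : ℝ × ℝ →L[ℝ] ℝ) z)
    convert h using 1
    simp [evalFun]
  | add p q hp hq =>
    have h := hp.add hq
    convert h using 1
    any_goals rfl
    · ext w : 1; simp [evalFun]
    · ext w <;> simp [evalFun] <;> ring
  | mul_X p i hp =>
    fin_cases i
    · have hx : HasFDerivAt (fun z : ℝ × ℝ => z.1) (ContinuousLinearMap.fst ℝ ℝ ℝ) z :=
        hasFDerivAt_fst
      have h := hp.mul hx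
      convert h using 1
      any_goals rfl
      · ext w : 1
        simp [evalFun]
      · ext w <;>
          simp [evalFun, pderiv_mul, pderiv_X, Pi.single_apply] <;> ring
    · have hx : HasFDerivAt (fun z : ℝ × ℝ => z.2) (ContinuousLinearMap.snd ℝ ℝ ℝ) z :=
        hasFDerivAt_snd
      have h := hp.mul hx
      convert h using 1
      any_goals rfl
      · ext w : 1
        simp [evalFun]
      · ext w <;>
          simp [evalFun, pderiv_mul, pderiv_X, Pi.single_apply] <;> ring

theorem pdx_evalFun (P : MvPolynomial (Fin 2) ℝ) (z : ℝ × ℝ) :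
    pdx (evalFun P) z = evalFun (pderiv 0 P) z := by
  rw [pdx, (evalFun_hasFDerivAt P z).fderiv]
  simp

theorem pdy_evalFun (P : MvPolynomial (Fin 2) ℝ) (z : ℝ × ℝ) :
    pdy (evalFun P) z = evalFun (pderiv 1 P) z := by
  rw [pdy, (evalFun_hasFDerivAt P z).fderiv]
  simp

open Finsupp in
def Decomp (k : ℕ) (A B : MvPolynomial (Fin 2) ℝ) : Prop :=
  ∃ p q : MvPolynomial (Fin 2) ℝ,
    p.totalDegree ≤ k + 1 ∧ q.totalDegree ≤ k - 1 ∧ (k = 0 → q = 0) ∧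
    pderiv 0 p + X 1 * q = A ∧ pderiv 1 p - X 0 * q = B

theorem decomp_zero (k : ℕ) : Decomp k 0 0 := by
  refine ⟨0, 0, by simp, by simp, fun _ => rfl, by simp, by simp⟩

theorem decomp_add {k : ℕ} {A B A' B' : MvPolynomial (Fin 2) ℝ}
    (h : Decomp k A B) (h' : Decomp k A' B') : Decomp k (A + A') (B + B') := by
  obtain ⟨p, q, hp, hq, h0, h1, h2⟩ := h
  obtain ⟨p', q', hp', hq', h0', h1', h2'⟩ := h'
  refine ⟨p + p', q + q', ?_, ?_, ?_, ?_, ?_⟩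
  · exact le_trans (totalDegree_add _ _) (max_le hp hp')
  · exact le_trans (totalDegree_add _ _) (max_le hq hq')
  · intro hk; rw [h0 hk, h0' hk, add_zero]
  · rw [← h1, ← h1']; rw [map_add]; ring
  · rw [← h2, ← h2']; rw [map_add]; ring

theorem finsupp_sum_fin2 (d : Fin 2 →₀ ℕ) : (d.sum fun _ e => e) = d 0 + d 1 := by
  rw [Finsupp.sum_fintype _ _ (fun _ => rfl)]
  exact Fin.sum_univ_two d

theorem decomp_monomial_left {k : ℕ} (d : Fin 2 →₀ ℕ) (c : ℝ)
    (hd : d 0 + d 1 ≤ k) : Decomp k (monomial d c) 0 := by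
  set m : ℝ := (d 0 : ℝ) + (d 1 : ℝ) + 1 with hm
  have hm0 : m ≠ 0 := by positivity
  refine ⟨monomial (d + Finsupp.single 0 1) (c / m),
    monomial (d - Finsupp.single 1 1) (c * (d 1) / m), ?_, ?_, ?_, ?_, ?_⟩
  · refine le_trans (totalDegree_monomial_le _ _) ?_
    rw [show (fun (_ : Fin 2) => (id : ℕ → ℕ)) = (fun _ e => e) by rfl, finsupp_sum_fin2]
    simp [Finsupp.single_apply]
    omega
  · rcases Nat.eq_zero_or_pos (d 1) with h1 | h1
    · simp [h1]
    · refine le_trans (totalDegree_monomial_le _ _) ?_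
      rw [show (fun (_ : Fin 2) => (id : ℕ → ℕ)) = (fun _ e => e) by rfl, finsupp_sum_fin2]
      simp [Finsupp.single_apply]
      omega
  · intro hk
    subst hk
    have : d 1 = 0 := by omega
    simp [this]
  · rw [pderiv_monomial,
      show X (1 : Fin 2) = monomial (Finsupp.single 1 1) (1 : ℝ) from rfl, monomial_mul,
      add_tsub_cancel_right]
    have hc0 : ((d + Finsupp.single 0 1 : Fin 2 →₀ ℕ) 0 : ℕ) = d 0 + 1 := by
      simp [Finsupp.single_apply]
    rw [hc0]
    rcases Nat.eq_zero_or_pos (d 1) with h1 | h1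
    · have hmm : m = (d 0 : ℝ) + 1 := by rw [hm, h1]; push_cast; ring
      simp only [h1, Nat.cast_zero, mul_zero, zero_div, map_zero, add_zero, one_mul]
      congr 1
      push_cast
      field_simp [hmm]
      rw [hmm]
    · have hidx : Finsupp.single 1 1 + (d - Finsupp.single 1 1) = d := by
        ext x
        fin_cases x <;> simp [Finsupp.single_apply] <;> omega
      rw [hidx, ← map_add]
      congr 1
      push_cast
      field_simp
      ring
  · rw [pderiv_monomial,
      show X (0 : Fin 2) = monomial (Finsupp.single 0 1) (1 : ℝ) from rfl, monomial_mul]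
    have hidx : d + Finsupp.single 0 1 - Finsupp.single 1 1
        = Finsupp.single 0 1 + (d - Finsupp.single 1 1) := by
      ext x
      fin_cases x <;> simp [Finsupp.single_apply] <;> omega
    rw [hidx]
    have hc1 : ((d + Finsupp.single 0 1 : Fin 2 →₀ ℕ) 1 : ℕ) = d 1 := by
      simp [Finsupp.single_apply]
    rw [hc1]
    have hc : (c / m * (d 1 : ℕ)) = 1 * (c * (d 1) / m) := by ring
    rw [hc, sub_self]

theorem decomp_monomial_right {k : ℕ} (d : Fin 2 →₀ ℕ) (c : ℝ)
    (hd : d 0 + d 1 ≤ k) : Decomp k 0 (monomial d c) := by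
  set m : ℝ := (d 0 : ℝ) + (d 1 : ℝ) + 1 with hm
  have hm0 : m ≠ 0 := by positivity
  refine ⟨monomial (d + Finsupp.single 1 1) (c / m),
    monomial (d - Finsupp.single 0 1) (-(c * (d 0)) / m), ?_, ?_, ?_, ?_, ?_⟩
  · refine le_trans (totalDegree_monomial_le _ _) ?_
    rw [show (fun (_ : Fin 2) => (id : ℕ → ℕ)) = (fun _ e => e) by rfl, finsupp_sum_fin2]
    simp [Finsupp.single_apply]
    omega
  · rcases Nat.eq_zero_or_pos (d 0) with h0 | h0
    · simp [h0]
    · refine le_trans (totalDegree_monomial_le _ _) ?_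
      rw [show (fun (_ : Fin 2) => (id : ℕ → ℕ)) = (fun _ e => e) by rfl, finsupp_sum_fin2]
      simp [Finsupp.single_apply]
      omega
  · intro hk
    subst hk
    have : d 0 = 0 := by omega
    simp [this]
  · rw [pderiv_monomial,
      show X (1 : Fin 2) = monomial (Finsupp.single 1 1) (1 : ℝ) from rfl, monomial_mul]
    have hidx : d + Finsupp.single 1 1 - Finsupp.single 0 1
        = Finsupp.single 1 1 + (d - Finsupp.single 0 1) := by
      ext x
      fin_cases x <;> simp [Finsupp.single_apply] <;> omega
    rw [hidx]
    have hc0 : ((d + Finsupp.single 1 1 : Fin 2 →₀ ℕ) 0 : ℕ) = d 0 := by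
      simp [Finsupp.single_apply]
    rw [hc0, ← map_add]
    have : (c / m * (d 0 : ℕ) + 1 * (-(c * (d 0)) / m)) = 0 := by push_cast; ring
    rw [this, map_zero]
  · rw [pderiv_monomial,
      show X (0 : Fin 2) = monomial (Finsupp.single 0 1) (1 : ℝ) from rfl, monomial_mul,
      add_tsub_cancel_right]
    have hc1 : ((d + Finsupp.single 1 1 : Fin 2 →₀ ℕ) 1 : ℕ) = d 1 + 1 := by
      simp [Finsupp.single_apply]
    rw [hc1]
    rcases Nat.eq_zero_or_pos (d 0) with h0 | h0
    · have hmm : m = (d 1 : ℝ) + 1 := by rw [hm, h0]; push_cast; ring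
      simp only [h0, Nat.cast_zero, mul_zero, neg_zero, zero_div, map_zero, one_mul, sub_zero]
      congr 1
      push_cast
      field_simp [hmm]
      rw [hmm]
    · have hidx : Finsupp.single 0 1 + (d - Finsupp.single 0 1) = d := by
        ext x
        fin_cases x <;> simp [Finsupp.single_apply] <;> omega
      rw [hidx, sub_eq_add_neg, ← map_neg, ← map_add]
      congr 1
      push_cast
      field_simp
      ring

theorem decomp_sum {k : ℕ} {ι : Type*} {s : Finset ι}
    {f g : ι → MvPolynomial (Fin 2) ℝ} (h : ∀ i ∈ s, Decomp k (f i) (g i)) :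
    Decomp k (∑ i ∈ s, f i) (∑ i ∈ s, g i) := by
  classical
  induction s using Finset.induction_on with
  | empty => simpa using decomp_zero k
  | insert a s' hni ih =>
    rw [Finset.sum_insert hni, Finset.sum_insert hni]
    exact decomp_add (h a (Finset.mem_insert_self a s'))
      (ih fun i hi => h i (Finset.mem_insert_of_mem hi))

theorem decomp_left {k : ℕ} (P : MvPolynomial (Fin 2) ℝ) (h : P.totalDegree ≤ k) :
    Decomp k P 0 := by
  have : Decomp k (∑ d ∈ P.support, monomial d (coeff d P)) (∑ d ∈ P.support, 0) := by
    refine decomp_sum fun d hd => decomp_monomial_left d _ ?_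
    have := le_totalDegree hd
    rw [finsupp_sum_fin2] at this
    omega
  rw [Finset.sum_const_zero] at this
  rwa [P.as_sum]

theorem decomp_right {k : ℕ} (P : MvPolynomial (Fin 2) ℝ) (h : P.totalDegree ≤ k) :
    Decomp k 0 P := by
  have : Decomp k (∑ d ∈ P.support, 0) (∑ d ∈ P.support, monomial d (coeff d P)) := by
    refine decomp_sum fun d hd => decomp_monomial_right d _ ?_
    have := le_totalDegree hd
    rw [finsupp_sum_fin2] at this
    omega
  rw [Finset.sum_const_zero] at this
  rwa [P.as_sum]

/-- Every vector field on `ℝ²` with polynomial components of total degree at most `k`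
decomposes as `∇p + x⊥·q` with `deg p ≤ k+1` and `deg q ≤ k−1` (`q = 0` when `k = 0`),
where `(x⊥·q)(x,y) = (y·q(x,y), −x·q(x,y))`. -/
theorem vector_poly_decomposition (k : ℕ) (v : ℝ × ℝ → ℝ × ℝ)
    (hv1 : IsPolyFunDeg (fun z => (v z).1) k)
    (hv2 : IsPolyFunDeg (fun z => (v z).2) k) :
    ∃ p q : ℝ × ℝ → ℝ,
      IsPolyFunDeg p (k + 1) ∧ IsPolyFunDeg q (k - 1) ∧
      (k = 0 → ∀ z, q z = 0) ∧
      ∀ z : ℝ × ℝ, v z = (pdx p z + z.2 * q z, pdy p z - z.1 * q z) := by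
  obtain ⟨P₁, hP₁, hval₁⟩ := hv1
  obtain ⟨P₂, hP₂, hval₂⟩ := hv2
  have hdec : Decomp k P₁ P₂ := by
    have h := decomp_add (decomp_left P₁ hP₁) (decomp_right P₂ hP₂)
    simpa using h
  obtain ⟨p, q, hp, hq, h0, h1, h2⟩ := hdec
  refine ⟨evalFun p, evalFun q, ⟨p, hp, fun z => rfl⟩, ⟨q, hq, fun z => rfl⟩, ?_, ?_⟩
  · intro hk z
    rw [h0 hk]
    simp [evalFun]
  · intro z
    have e1 : (v z).1 = pdx (evalFun p) z + z.2 * evalFun q z := by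
      rw [show (v z).1 = eval ![z.1, z.2] P₁ from hval₁ z, pdx_evalFun, ← h1]
      simp [evalFun]
    have e2 : (v z).2 = pdy (evalFun p) z - z.1 * evalFun q z := by
      rw [show (v z).2 = eval ![z.1, z.2] P₂ from hval₂ z, pdy_evalFun, ← h2]
      simp [evalFun]
    exact Prod.ext e1 e2
end

section
/- Let p₁, p₂ : ℝ² → ℝ and q₁, q₂ : ℝ² → ℝ be polynomial functions such that ∇p₁ + x⊥·q₁ = ∇p₂ + x⊥·q₂ as functions on ℝ². Then q₁ = q₂ and ∇p₁ = ∇p₂ (so p₁ − p₂ is constant). In particular the sum ∇ℙ_{k+1} + x⊥ℙ_{k−1} is direct: if ∇p = x⊥·q for polynomials p, q, then q = 0 and ∇p = 0. -/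
/-- `f : ℝ² → ℝ` is a real polynomial function. -/
def IsPolyFun (f : ℝ × ℝ → ℝ) : Prop :=
  ∃ P : MvPolynomial (Fin 2) ℝ, ∀ z : ℝ × ℝ, f z = MvPolynomial.eval ![z.1, z.2] P

lemma eval_differentiable (P : MvPolynomial (Fin 2) ℝ) :
    Differentiable ℝ (fun z : ℝ × ℝ => MvPolynomial.eval ![z.1, z.2] P) := by
  induction P using MvPolynomial.induction_on with
  | C a => simpa using differentiable_const a
  | add p q hp hq => simpa using hp.fun_add hq
  | mul_X p i hp =>
      have : (fun z : ℝ × ℝ => MvPolynomial.eval ![z.1, z.2] (p * MvPolynomial.X i))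
          = fun z : ℝ × ℝ => (MvPolynomial.eval ![z.1, z.2] p) * (![z.1, z.2] i) := by
        funext z; simp
      rw [this]
      refine hp.mul ?_
      fin_cases i
      · simpa using differentiable_fst
      · simpa using differentiable_snd

lemma poly_diff {f : ℝ × ℝ → ℝ} (hf : IsPolyFun f) : Differentiable ℝ f := by
  obtain ⟨P, hP⟩ := hf
  have : f = fun z : ℝ × ℝ => MvPolynomial.eval ![z.1, z.2] P := funext hP
  rw [this]; exact eval_differentiable P

lemma fderiv_apply_eq {f : ℝ × ℝ → ℝ} (hf : Differentiable ℝ f) (w : ℝ × ℝ) (v : ℝ × ℝ) :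
    fderiv ℝ f w v = v.1 * pdx f w + v.2 * pdy f w := by
  have hv : v = v.1 • ((1 : ℝ), (0 : ℝ)) + v.2 • ((0 : ℝ), (1 : ℝ)) := by
    ext <;> simp
  rw [hv, map_add, map_smul, map_smul]
  simp [pdx, pdy]

/-- Key lemma: if ∇p = x⊥ q then p is constant and q = 0. -/
lemma key (p q : ℝ × ℝ → ℝ) (hp : IsPolyFun p) (hq : IsPolyFun q)
    (hx : ∀ z : ℝ × ℝ, pdx p z = z.2 * q z)
    (hy : ∀ z : ℝ × ℝ, pdy p z = -(z.1 * q z)) :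
    (∀ z, q z = 0) ∧ (∀ z, pdx p z = 0 ∧ pdy p z = 0) ∧ (∀ z, p z = p 0) := by
  have hpd := poly_diff hp
  have hqc : Continuous q := (poly_diff hq).continuous
  -- p is constant along rays
  have hconst : ∀ z : ℝ × ℝ, p z = p 0 := by
    intro z
    set g : ℝ → ℝ := fun t => p (t * z.1, t * z.2) with hg
    have hgd : ∀ t : ℝ, HasDerivAt g 0 t := by
      intro t
      have hline : HasDerivAt (fun t : ℝ => ((t * z.1, t * z.2) : ℝ × ℝ)) (z.1, z.2) t := by
        have h1 : HasDerivAt (fun t : ℝ => t * z.1) z.1 t := by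
          simpa using (hasDerivAt_id t).mul_const z.1
        have h2 : HasDerivAt (fun t : ℝ => t * z.2) z.2 t := by
          simpa using (hasDerivAt_id t).mul_const z.2
        exact h1.prodMk h2
      have hcomp := (hpd.differentiableAt.hasFDerivAt (x := (t * z.1, t * z.2))).comp_hasDerivAt t hline
      have hval : fderiv ℝ p (t * z.1, t * z.2) (z.1, z.2) = 0 := by
        rw [fderiv_apply_eq hpd]
        rw [hx, hy]
        ring
      rw [hval] at hcomp
      exact hcomp
    have := is_const_of_deriv_eq_zero (fun t => (hgd t).differentiableAt)
      (fun t => (hgd t).deriv) 1 0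
    simp [hg] at this; exact this
  have hpeq : p = fun _ => p 0 := funext hconst
  have hpdx0 : ∀ z, pdx p z = 0 := by
    intro z; rw [hpeq]; simp [pdx]
  have hpdy0 : ∀ z, pdy p z = 0 := by
    intro z; rw [hpeq]; simp [pdy]
  have hyq : ∀ z : ℝ × ℝ, z.2 * q z = 0 := fun z => by rw [← hx z, hpdx0]
  have hxq : ∀ z : ℝ × ℝ, z.1 * q z = 0 := fun z => by
    have := hy z; rw [hpdy0] at this; linarith
  have hq0 : ∀ z, q z = 0 := by
    intro z
    rcases eq_or_ne z.1 0 with h1 | h1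
    · rcases eq_or_ne z.2 0 with h2 | h2
      · -- z = 0; use continuity
        have hz : z = (0, 0) := Prod.ext h1 h2
        have hcont : Continuous (fun t : ℝ => q (t, 0)) :=
          hqc.comp (continuous_id.prodMk continuous_const)
        have heq : (fun t : ℝ => q (t, 0)) = fun _ => (0 : ℝ) := by
          apply Continuous.ext_on (dense_compl_singleton (0 : ℝ)) hcont continuous_const
          intro t ht
          have := hxq (t, 0)
          simp only [Set.mem_compl_iff, Set.mem_singleton_iff] at ht
          simpa [ht] using mul_eq_zero.mp this
        have := congrFun heq 0
        simpa [hz] using this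
      · have := hyq z
        exact (mul_eq_zero.mp this).resolve_left h2
    · exact (mul_eq_zero.mp (hxq z)).resolve_left h1
  exact ⟨hq0, fun z => ⟨hpdx0 z, hpdy0 z⟩, hconst⟩


/-- If `∇p₁ + x⊥·q₁ = ∇p₂ + x⊥·q₂` for polynomial functions, then `q₁ = q₂` and
`∇p₁ = ∇p₂` (so `p₁ − p₂` is constant).  In particular the sum `∇ℙ_{k+1} + x⊥ℙ_{k−1}`
is direct: if `∇p = x⊥·q` then `q = 0` and `∇p = 0`. -/
theorem gradient_perp_sum_is_direct (p₁ p₂ q₁ q₂ : ℝ × ℝ → ℝ)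
    (hp₁ : IsPolyFun p₁) (hp₂ : IsPolyFun p₂)
    (hq₁ : IsPolyFun q₁) (hq₂ : IsPolyFun q₂)
    (h : ∀ z : ℝ × ℝ,
      (pdx p₁ z + z.2 * q₁ z, pdy p₁ z - z.1 * q₁ z)
        = (pdx p₂ z + z.2 * q₂ z, pdy p₂ z - z.1 * q₂ z)) :
    ((∀ z, q₁ z = q₂ z) ∧
     (∀ z, pdx p₁ z = pdx p₂ z ∧ pdy p₁ z = pdy p₂ z) ∧
     (∃ c : ℝ, ∀ z, p₁ z - p₂ z = c)) ∧
    (∀ p q : ℝ × ℝ → ℝ, IsPolyFun p → IsPolyFun q →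
      (∀ z : ℝ × ℝ, (pdx p z, pdy p z) = (z.2 * q z, -(z.1 * q z))) →
      (∀ z, q z = 0) ∧ (∀ z, pdx p z = 0 ∧ pdy p z = 0)) := by
  constructor
  · -- general case via key applied to differences
    set P : ℝ × ℝ → ℝ := fun z => p₁ z - p₂ z with hPdef
    set Q : ℝ × ℝ → ℝ := fun z => q₂ z - q₁ z with hQdef
    have hPpoly : IsPolyFun P := by
      obtain ⟨A, hA⟩ := hp₁; obtain ⟨B, hB⟩ := hp₂
      exact ⟨A - B, fun z => by simp [hPdef, hA z, hB z]⟩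
    have hQpoly : IsPolyFun Q := by
      obtain ⟨A, hA⟩ := hq₁; obtain ⟨B, hB⟩ := hq₂
      exact ⟨B - A, fun z => by simp [hQdef, hA z, hB z]⟩
    have hd₁ := poly_diff hp₁
    have hd₂ := poly_diff hp₂
    have hPdx : ∀ z, pdx P z = pdx p₁ z - pdx p₂ z := by
      intro z
      have : fderiv ℝ P z = fderiv ℝ p₁ z - fderiv ℝ p₂ z :=
        fderiv_sub (hd₁.differentiableAt) (hd₂.differentiableAt)
      simp [pdx, this]
    have hPdy : ∀ z, pdy P z = pdy p₁ z - pdy p₂ z := by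
      intro z
      have : fderiv ℝ P z = fderiv ℝ p₁ z - fderiv ℝ p₂ z :=
        fderiv_sub (hd₁.differentiableAt) (hd₂.differentiableAt)
      simp [pdy, this]
    have h1 : ∀ z : ℝ × ℝ, pdx P z = z.2 * Q z := by
      intro z
      have := (Prod.mk.injEq _ _ _ _).mp (h z)
      rw [hPdx]; simp only [hQdef]; linarith [this.1]
    have h2 : ∀ z : ℝ × ℝ, pdy P z = -(z.1 * Q z) := by
      intro z
      have := (Prod.mk.injEq _ _ _ _).mp (h z)
      rw [hPdy]; simp only [hQdef]; linarith [this.2]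
    obtain ⟨hQ0, hgrad, hconst⟩ := key P Q hPpoly hQpoly h1 h2
    refine ⟨fun z => ?_, fun z => ?_, ⟨P 0, hconst⟩⟩
    · have := hQ0 z; simp only [hQdef] at this; linarith
    · have hgx := (hgrad z).1; have hgy := (hgrad z).2
      rw [hPdx] at hgx; rw [hPdy] at hgy
      constructor <;> linarith
  · intro p q hp hq hgrad
    have h1 : ∀ z : ℝ × ℝ, pdx p z = z.2 * q z := fun z =>
      ((Prod.mk.injEq _ _ _ _).mp (hgrad z)).1
    have h2 : ∀ z : ℝ × ℝ, pdy p z = -(z.1 * q z) := fun z =>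
      ((Prod.mk.injEq _ _ _ _).mp (hgrad z)).2
    obtain ⟨hQ0, hg, _⟩ := key p q hp hq h1 h2
    exact ⟨hQ0, hg⟩
end

section
/- Fix a center c = (c₁,c₂) ∈ ℝ² and a scale h > 0, and for a multi-index α = (α₁,α₂) ∈ ℕ² define the scaled monomial m_α(x,y) := ((x−c₁)/h)^{α₁}·((y−c₂)/h)^{α₂} and the scaled perpendicular field x⊥(x,y) := ((y−c₂)/h, −(x−c₁)/h). Then for every β = (β_x, β_y) ∈ ℕ², writing |β| := β_x + β_y, the following identity of vector fields holds on ℝ²: (m_β, 0) = (h/(|β|+1))·∇m_{(β_x+1, β_y)} + (β_y/(|β|+1))·x⊥·m_{(β_x, β_y−1)}, where the second term is interpreted as zero when β_y = 0. -/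
/-- Scaled monomial `m_α(x,y) = ((x−c₁)/h)^{α₁}·((y−c₂)/h)^{α₂}` with center `c`, scale `h`. -/
noncomputable def smon (c : ℝ × ℝ) (h : ℝ) (α : ℕ × ℕ) (z : ℝ × ℝ) : ℝ :=
  ((z.1 - c.1) / h) ^ α.1 * ((z.2 - c.2) / h) ^ α.2

lemma smon_hasFDerivAt (c : ℝ × ℝ) (h : ℝ) (a b : ℕ) (z : ℝ × ℝ) :
    HasFDerivAt (smon c h (a, b))
      ((((a : ℝ) * ((z.1 - c.1) / h) ^ (a - 1) * (1 / h)) * ((z.2 - c.2) / h) ^ b)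
          • ContinuousLinearMap.fst ℝ ℝ ℝ
        + (((z.1 - c.1) / h) ^ a * ((b : ℝ) * ((z.2 - c.2) / h) ^ (b - 1) * (1 / h)))
          • ContinuousLinearMap.snd ℝ ℝ ℝ) z := by
  have h1 : HasDerivAt (fun t : ℝ => ((t - c.1) / h) ^ a)
      ((a : ℝ) * ((z.1 - c.1) / h) ^ (a - 1) * (1 / h)) z.1 := by
    have := (((hasDerivAt_id z.1).sub_const c.1).div_const h).pow a
    simpa [Pi.pow_def, div_eq_mul_inv, mul_comm, mul_assoc, mul_left_comm] using this
  have h2 : HasDerivAt (fun t : ℝ => ((t - c.2) / h) ^ b)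
      ((b : ℝ) * ((z.2 - c.2) / h) ^ (b - 1) * (1 / h)) z.2 := by
    have := (((hasDerivAt_id z.2).sub_const c.2).div_const h).pow b
    simpa [Pi.pow_def, div_eq_mul_inv, mul_comm, mul_assoc, mul_left_comm] using this
  have H1 : HasFDerivAt (fun z : ℝ × ℝ => ((z.1 - c.1) / h) ^ a)
      (((a : ℝ) * ((z.1 - c.1) / h) ^ (a - 1) * (1 / h)) • ContinuousLinearMap.fst ℝ ℝ ℝ) z :=
    h1.comp_hasFDerivAt z (hasFDerivAt_fst)
  have H2 : HasFDerivAt (fun z : ℝ × ℝ => ((z.2 - c.2) / h) ^ b)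
      (((b : ℝ) * ((z.2 - c.2) / h) ^ (b - 1) * (1 / h)) • ContinuousLinearMap.snd ℝ ℝ ℝ) z :=
    h2.comp_hasFDerivAt z (hasFDerivAt_snd)
  have := H1.mul H2
  unfold smon
  refine this.congr_fderiv ?_
  ext w <;> simp [ContinuousLinearMap.smul_apply] <;> ring

lemma pdx_smon (c : ℝ × ℝ) (h : ℝ) (a b : ℕ) (z : ℝ × ℝ) :
    pdx (smon c h (a, b)) z
      = ((a : ℝ) * ((z.1 - c.1) / h) ^ (a - 1) * (1 / h)) * ((z.2 - c.2) / h) ^ b := by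
  unfold pdx
  rw [(smon_hasFDerivAt c h a b z).fderiv]
  simp

lemma pdy_smon (c : ℝ × ℝ) (h : ℝ) (a b : ℕ) (z : ℝ × ℝ) :
    pdy (smon c h (a, b)) z
      = ((z.1 - c.1) / h) ^ a * ((b : ℝ) * ((z.2 - c.2) / h) ^ (b - 1) * (1 / h)) := by
  unfold pdy
  rw [(smon_hasFDerivAt c h a b z).fderiv]
  simp

/-- Decomposition of the vector scaled monomial `(m_β, 0)` into a gradient part and a
perpendicular part: `(m_β, 0) = (h/(|β|+1))·∇m_{(βx+1,βy)} + (βy/(|β|+1))·x⊥·m_{(βx,βy−1)}`,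
with `x⊥(x,y) = ((y−c₂)/h, −(x−c₁)/h)`; the second term vanishes when `βy = 0` since its
coefficient `βy/(|β|+1)` is zero. -/
theorem vector_monomial_decomposition_x (c : ℝ × ℝ) (h : ℝ) (hh : 0 < h) (βx βy : ℕ) :
    ∀ z : ℝ × ℝ,
      (smon c h (βx, βy) z, (0 : ℝ))
        = ((h / ((βx : ℝ) + (βy : ℝ) + 1)) * pdx (smon c h (βx + 1, βy)) z
             + ((βy : ℝ) / ((βx : ℝ) + (βy : ℝ) + 1))
                 * (((z.2 - c.2) / h) * smon c h (βx, βy - 1) z),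
           (h / ((βx : ℝ) + (βy : ℝ) + 1)) * pdy (smon c h (βx + 1, βy)) z
             + ((βy : ℝ) / ((βx : ℝ) + (βy : ℝ) + 1))
                 * ((-(z.1 - c.1) / h) * smon c h (βx, βy - 1) z)) := by
  intro z
  have hne : h ≠ 0 := ne_of_gt hh
  have hd : ((βx : ℝ) + (βy : ℝ) + 1) ≠ 0 := by positivity
  rw [pdx_smon, pdy_smon]
  unfold smon
  cases βy with
  | zero =>
    simp only [Nat.cast_zero, Nat.cast_add, Nat.cast_one, Nat.add_sub_cancel]
    rw [Prod.mk.injEq]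
    constructor <;> (simp only [div_pow]; field_simp; try ring)
  | succ n =>
    simp only [Nat.add_sub_cancel, Nat.succ_sub_one, Nat.cast_succ, Nat.cast_add, Nat.cast_one]
    rw [Prod.mk.injEq]
    constructor <;> (simp only [div_pow]; field_simp; try ring)
end
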